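/- For every finite automaton 𝒜 on Σ and every acceptance condition cond = (c,R) with c ∈ {run, inf, fin, ninf} and R ∈ {⊓, ⊆, =}, the ω-language L_cond(𝒜) accepted by 𝒜 under cond is ω-rational. -/

import Mathlib

open Set

/-- A finite automaton used for recognizing ω-words over the alphabet `A`:
a finite type of states, a transition relation, an initial state and an
acceptance table (a set of sets of states). -/
structure OFA (A : Type) : Type 1 where
  Q : Type
  [finQ : Finite Q]
  T : Q → A → Q → Prop
  q0 : Q
  Acc : Set (Set Q)

attribute [instance] OFA.finQ

namespace OFA

variable {A : Type}

/-- Deterministic automaton: at most one successor per state and letter. -/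
def Deterministic (M : OFA A) : Prop :=
  ∀ p a q q', M.T p a q → M.T p a q' → q = q'

/-- Complete automaton: at least one successor per state and letter. -/
def Complete (M : OFA A) : Prop :=
  ∀ p a, ∃ q, M.T p a q

/-- `p` is an initial infinite path of `M` with label `x`. -/
def InitPath (M : OFA A) (p : ℕ → M.Q) (x : ℕ → A) : Prop :=
  p 0 = M.q0 ∧ ∀ i, M.T (p i) (x i) (p (i + 1))

/-- States visited at least once (at a positive index). -/
def runSet (M : OFA A) (p : ℕ → M.Q) : Set M.Q := {q | ∃ i, 0 < i ∧ p i = q}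

/-- States visited infinitely often. -/
def infSet (M : OFA A) (p : ℕ → M.Q) : Set M.Q := {q | ∀ n, ∃ i, n ≤ i ∧ p i = q}

/-- States visited finitely many times but at least once. -/
def finSet (M : OFA A) (p : ℕ → M.Q) : Set M.Q := M.runSet p \ M.infSet p

/-- States visited finitely many times or never. -/
def ninfSet (M : OFA A) (p : ℕ → M.Q) : Set M.Q := (M.infSet p)ᶜ

end OFA

/-- Selector for the set of states associated to a path. -/
inductive CSel | run | inf | fin | ninf

/-- Selector for the comparison relation with a member of the acceptance table. -/
inductive RSel | meet | sub | eq

def OFA.csel {A : Type} (M : OFA A) : CSel → (ℕ → M.Q) → Set M.Q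
  | .run => M.runSet
  | .inf => M.infSet
  | .fin => M.finSet
  | .ninf => M.ninfSet

def RSel.holds {Q : Type} : RSel → Set Q → Set Q → Prop
  | .meet => fun S F => (S ∩ F).Nonempty
  | .sub => fun S F => S ⊆ F
  | .eq => fun S F => S = F

/-- The ω-language accepted by `M` under the condition `(c, r)`. -/
def OFA.Lang {A : Type} (M : OFA A) (c : CSel) (r : RSel) : Set (ℕ → A) :=
  {x | ∃ p, M.InitPath p x ∧ ∃ F ∈ M.Acc, RSel.holds r (M.csel c p) F}

/-- The ω-language accepted by `M` under the condition 𝔸 : some `F ∈ Acc` with `F ⊆ run p`. -/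
def OFA.LangA {A : Type} (M : OFA A) : Set (ℕ → A) :=
  {x | ∃ p, M.InitPath p x ∧ ∃ F ∈ M.Acc, F ⊆ M.runSet p}

/-- The ω-language accepted by `M` under the condition 𝔸' : some `F ∈ Acc` with `F ⊈ run p`. -/
def OFA.LangA' {A : Type} (M : OFA A) : Set (ℕ → A) :=
  {x | ∃ p, M.InitPath p x ∧ ∃ F ∈ M.Acc, ¬ F ⊆ M.runSet p}

/-- The ω-language accepted by `M` under the condition 𝕃 : some `F ∈ Acc` with `F ⊆ inf p`. -/
def OFA.LangL {A : Type} (M : OFA A) : Set (ℕ → A) :=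
  {x | ∃ p, M.InitPath p x ∧ ∃ F ∈ M.Acc, F ⊆ M.infSet p}

/-- The ω-language accepted by `M` under the condition 𝕃' : some `F ∈ Acc` with `F ⊈ inf p`. -/
def OFA.LangL' {A : Type} (M : OFA A) : Set (ℕ → A) :=
  {x | ∃ p, M.InitPath p x ∧ ∃ F ∈ M.Acc, ¬ F ⊆ M.infSet p}

/-- The class of ω-languages of the form `L M` for automata `M` satisfying `P`. -/
def AutClass (A : Type) (P : OFA A → Prop) (L : (M : OFA A) → Set (ℕ → A)) :
    Set (Set (ℕ → A)) :=
  {X | ∃ M : OFA A, P M ∧ L M = X}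

/-- The finite factor `x_i x_{i+1} … x_{j-1}` of the ω-word `x`. -/
def extract {A : Type} (x : ℕ → A) (i j : ℕ) : List A :=
  (List.range (j - i)).map fun k => x (i + k)

/-- The ω-language `V · U^ω`: ω-words of the form `u₀u₁u₂⋯` with `u₀ ∈ V`
and all `uᵢ` (i ≥ 1) nonempty words of `U`, described via cut points. -/
def omegaPiece {A : Type} (V U : Language A) : Set (ℕ → A) :=
  {x | ∃ c : ℕ → ℕ, (∀ i, c i < c (i + 1)) ∧
    extract x 0 (c 0) ∈ V ∧ ∀ i, extract x (c i) (c (i + 1)) ∈ U}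

/-- An ω-language is ω-rational if it is a finite union `⋃ᵢ Vᵢ · Uᵢ^ω`
with all `Vᵢ`, `Uᵢ` rational (regular) languages of finite words. -/
def IsOmegaRat {A : Type} (L : Set (ℕ → A)) : Prop :=
  ∃ (n : ℕ) (V U : Fin n → Language A),
    (∀ i, (V i).IsRegular) ∧ (∀ i, (U i).IsRegular) ∧
    L = ⋃ i, omegaPiece (V i) (U i)

/-- Countable union of closed sets. -/
def IsFsigmaSet {X : Type*} [TopologicalSpace X] (S : Set X) : Prop :=
  ∃ f : ℕ → Set X, (∀ n, IsClosed (f n)) ∧ S = ⋃ n, f n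

/-- Countable intersection of open sets. -/
def IsGdeltaSet {X : Type*} [TopologicalSpace X] (S : Set X) : Prop :=
  ∃ f : ℕ → Set X, (∀ n, IsOpen (f n)) ∧ S = ⋂ n, f n

namespace OmegaAux

variable {A : Type} {Q : Type}

theorem extract_self {A : Type} (x : ℕ → A) (i : ℕ) : extract x i i = [] := by
  simp [extract]

theorem extract_length {A : Type} (x : ℕ → A) (i j : ℕ) :
    (extract x i j).length = j - i := by simp [extract]

theorem extract_getElem {A : Type} (x : ℕ → A) (i j k : ℕ)
    (h : k < (extract x i j).length) : (extract x i j)[k] = x (i + k) := by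
  simp [extract] at h ⊢

theorem extract_cons {A : Type} (x : ℕ → A) (i j : ℕ) (h : i < j) :
    extract x i j = x i :: extract x (i + 1) j := by
  have h1 : j - i = (j - (i + 1)) + 1 := by omega
  rw [extract, h1, List.range_succ_eq_map]
  simp [extract, List.map_map, Function.comp]
  intro k _; congr 1; omega

inductive WalkV (T : Q → A → Q → Prop) : Q → List A → Q → Set Q → Prop
  | nil (p : Q) : WalkV T p [] p ∅
  | cons {p a q l r S} : T p a q → WalkV T q l r S → WalkV T p (a :: l) r (insert q S)

theorem walkV_nil_iff (T : Q → A → Q → Prop) (p r : Q) (S : Set Q) :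
    WalkV T p [] r S ↔ r = p ∧ S = ∅ := by
  constructor
  · rintro h; cases h; exact ⟨rfl, rfl⟩
  · rintro ⟨rfl, rfl⟩; exact WalkV.nil _

theorem walkV_cons_iff (T : Q → A → Q → Prop) (p r : Q) (a : A) (l : List A) (S : Set Q) :
    WalkV T p (a :: l) r S ↔ ∃ q S', T p a q ∧ WalkV T q l r S' ∧ S = insert q S' := by
  constructor
  · rintro h; cases h with
    | cons h w => exact ⟨_, _, h, w, rfl⟩
  · rintro ⟨q, S', h, w, rfl⟩; exact WalkV.cons h w

theorem walkV_congr {T : Q → A → Q → Prop} {p r : Q} {l : List A} {S S' : Set Q}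
    (h : WalkV T p l r S) (hS : S = S') : WalkV T p l r S' := hS ▸ h

/-- From an infinite path, each finite segment is a walk whose visited set is
the set of states seen at times in `(i, i+n]`. -/
theorem path_walkV {T : Q → A → Q → Prop} {p : ℕ → Q} {x : ℕ → A}
    (h : ∀ k, T (p k) (x k) (p (k + 1))) :
    ∀ n i, WalkV T (p i) (extract x i (i + n)) (p (i + n))
      {s | ∃ k, i < k ∧ k ≤ i + n ∧ p k = s} := by
  intro n
  induction n with
  | zero =>
    intro i
    have : {s | ∃ k, i < k ∧ k ≤ i + 0 ∧ p k = s} = (∅ : Set Q) := by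
      ext s; simp; omega
    simp only [Nat.add_zero]
    rw [extract_self]
    exact walkV_congr (WalkV.nil _) this.symm
  | succ n ih =>
    intro i
    have hlt : i < i + (n + 1) := by omega
    rw [extract_cons x i _ hlt]
    have h2 : i + (n + 1) = (i + 1) + n := by omega
    have w := WalkV.cons (h i) (ih (i + 1))
    rw [h2]
    apply walkV_congr w
    ext s
    simp only [Set.mem_insert_iff, Set.mem_setOf_eq]
    constructor
    · rintro (rfl | ⟨k, h1, h2, rfl⟩)
      · exact ⟨i + 1, by omega, by omega, rfl⟩
      · exact ⟨k, by omega, by omega, rfl⟩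
    · rintro ⟨k, h1, h2, rfl⟩
      rcases Nat.eq_or_lt_of_le (Nat.succ_le_of_lt h1) with h3 | h3
      · left; rw [← h3]
      · right; exact ⟨k, by omega, by omega, rfl⟩

/-- From a walk matching a segment of `x`, reconstruct a state function. -/
theorem walkV_path {T : Q → A → Q → Prop} {q r : Q} {l : List A} {S : Set Q}
    (w : WalkV T q l r S) :
    ∀ (x : ℕ → A) (i : ℕ), (∀ k (h : k < l.length), l[k] = x (i + k)) →
    ∃ f : ℕ → Q, f i = q ∧ f (i + l.length) = r ∧
      (∀ k, i ≤ k → k < i + l.length → T (f k) (x k) (f (k + 1))) ∧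
      S = {s | ∃ k, i < k ∧ k ≤ i + l.length ∧ f k = s} := by
  induction w with
  | nil p =>
    intro x i _
    refine ⟨fun _ => p, rfl, rfl, by intro k h1 h2; exfalso; simp at h2; omega, ?_⟩
    ext s; simp; omega
  | @cons p a q l r S ht hw ih =>
    intro x i hmatch
    have ha : a = x i := by
      have := hmatch 0 (by simp)
      simpa using this
    have hl : ∀ k (h : k < l.length), l[k] = x (i + 1 + k) := by
      intro k hk
      have := hmatch (k + 1) (by simp; omega)
      simpa [Nat.add_assoc, Nat.add_comm 1 k] using this
    obtain ⟨f₁, hf0, hfend, hftrans, hfset⟩ := ih x (i + 1) hl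
    refine ⟨fun k => if k ≤ i then p else f₁ k, by simp, ?_, ?_, ?_⟩
    · dsimp only
      rw [if_neg (by simp : ¬ (i + (a :: l).length ≤ i)),
        show i + (a :: l).length = (i + 1) + l.length by simp; omega]
      exact hfend
    · intro k h1 h2
      dsimp only
      rcases Nat.eq_or_lt_of_le h1 with h3 | h3
      · cases h3
        rw [if_pos le_rfl, if_neg (by omega : ¬ (i + 1 ≤ i)),
          show f₁ (i + 1) = q from hf0, ← ha]
        exact ht
      · rw [if_neg (by omega : ¬ (k ≤ i)), if_neg (by omega : ¬ (k + 1 ≤ i))]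
        exact hftrans k (by omega) (by simp at h2; omega)
    · ext s
      simp only [Set.mem_insert_iff, Set.mem_setOf_eq, List.length_cons]
      constructor
      · rintro (rfl | hs)
        · refine ⟨i + 1, by omega, by omega, ?_⟩
          rw [if_neg (by omega : ¬ (i + 1 ≤ i))]
          exact hf0
        · rw [hfset] at hs
          obtain ⟨k, h1, h2, rfl⟩ := hs
          refine ⟨k, by omega, by omega, ?_⟩
          rw [if_neg (by omega : ¬ (k ≤ i))]
      · rintro ⟨k, h1, h2, hk⟩
        rw [if_neg (by omega : ¬ (k ≤ i))] at hk
        rcases Nat.eq_or_lt_of_le (Nat.succ_le_of_lt h1) with h3 | h3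
        · left; rw [← hk, ← h3]; exact hf0
        · right; rw [hfset]
          exact ⟨k, by omega, by omega, hk⟩


theorem mem_evalFrom_iff {α σ : Type*} (N : NFA α σ) :
    ∀ (l : List α) (S : Set σ) (t : σ), t ∈ N.evalFrom S l ↔ ∃ s ∈ S, t ∈ N.evalFrom {s} l := by
  intro l
  induction l with
  | nil => intro S t; simp
  | cons a l ih =>
    intro S t
    have e : ∀ (S : Set σ), N.evalFrom S (a :: l) = N.evalFrom (N.stepSet S a) l := fun _ => rfl
    rw [e, ih]
    constructor
    · rintro ⟨u, hu, htu⟩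
      rw [NFA.mem_stepSet] at hu
      obtain ⟨s, hs, hsu⟩ := hu
      refine ⟨s, hs, ?_⟩
      rw [e, ih]
      exact ⟨u, by rw [NFA.mem_stepSet]; exact ⟨s, rfl, hsu⟩, htu⟩
    · rintro ⟨s, hs, ht⟩
      rw [e, ih] at ht
      obtain ⟨u, hu, htu⟩ := ht
      rw [NFA.mem_stepSet] at hu
      obtain ⟨s', hs', hsu⟩ := hu
      cases hs'
      refine ⟨u, ?_, htu⟩
      rw [NFA.mem_stepSet]
      exact ⟨s, hs, hsu⟩

/-- The NFA tracking the current state and the set of visited states. -/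
def visitNFA (T : Q → A → Q → Prop) (p q : Q) (S : Set Q) : NFA A (Q × Set Q) where
  step s a := {t | T s.1 a t.1 ∧ t.2 = insert t.1 s.2}
  start := {(p, ∅)}
  accept := {(q, S)}

theorem visitNFA_evalFrom (T : Q → A → Q → Prop) (p q : Q) (S : Set Q) :
    ∀ (l : List A) (s : Q) (T₀ : Set Q) (t : Q × Set Q),
      t ∈ (visitNFA T p q S).evalFrom {(s, T₀)} l ↔
        ∃ S', WalkV T s l t.1 S' ∧ t.2 = T₀ ∪ S' := by
  intro l
  induction l with
  | nil =>
    intro s T₀ t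
    simp only [NFA.evalFrom_nil, Set.mem_singleton_iff, walkV_nil_iff]
    constructor
    · rintro rfl; exact ⟨∅, ⟨rfl, rfl⟩, by simp⟩
    · rintro ⟨S', ⟨h1, rfl⟩, h2⟩
      have : t = (t.1, t.2) := rfl
      rw [this, h1, h2]; simp
  | cons a l ih =>
    intro s T₀ t
    have e : (visitNFA T p q S).evalFrom {(s, T₀)} (a :: l)
        = (visitNFA T p q S).evalFrom ((visitNFA T p q S).stepSet {(s, T₀)} a) l := rfl
    rw [e, mem_evalFrom_iff]
    constructor
    · rintro ⟨u, hu, htu⟩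
      rw [NFA.mem_stepSet] at hu
      obtain ⟨s', hs', hu2⟩ := hu
      cases hs'
      obtain ⟨h1, h2⟩ := hu2
      have : u = (u.1, u.2) := rfl
      rw [this, h2] at htu
      rw [ih] at htu
      obtain ⟨S', hw, ht2⟩ := htu
      refine ⟨insert u.1 S', WalkV.cons h1 hw, ?_⟩
      rw [ht2]; ext z; simp [Set.mem_insert_iff]; tauto
    · rintro ⟨S₂, hw, ht2⟩
      rw [walkV_cons_iff] at hw
      obtain ⟨q₁, S', h1, hw', rfl⟩ := hw
      refine ⟨(q₁, insert q₁ T₀), ?_, ?_⟩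
      · rw [NFA.mem_stepSet]
        exact ⟨(s, T₀), rfl, h1, rfl⟩
      · rw [ih]
        refine ⟨S', hw', ?_⟩
        rw [ht2]; ext z; simp [Set.mem_insert_iff]; tauto

theorem walkV_regular [Finite Q] (T : Q → A → Q → Prop) (p q : Q) (S : Set Q) :
    Language.IsRegular {l : List A | WalkV T p l q S} := by
  have : Fintype (Set (Q × Set Q)) := Fintype.ofFinite _
  refine ⟨Set (Q × Set Q), this, (visitNFA T p q S).toDFA, ?_⟩
  rw [NFA.toDFA_correct]
  ext l
  rw [NFA.mem_accepts]
  show (∃ t ∈ ({(q, S)} : Set (Q × Set Q)), t ∈ _) ↔ _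
  constructor
  · rintro ⟨t, ht, htl⟩
    cases ht
    rw [show (visitNFA T p q S).start = {(p, (∅ : Set Q))} from rfl, visitNFA_evalFrom] at htl
    obtain ⟨S', hw, hS⟩ := htl
    simp only [Set.empty_union] at hS
    have h' : WalkV T p l q S := by simpa [hS] using hw
    exact h'
  · intro hw
    refine ⟨(q, S), rfl, ?_⟩
    rw [show (visitNFA T p q S).start = {(p, (∅ : Set Q))} from rfl, visitNFA_evalFrom]
    exact ⟨S, hw, by simp⟩


/-- Index of the segment containing `n`, for cut points `e`. -/
def segIdx (e : ℕ → ℕ) (n : ℕ) : ℕ := Nat.findGreatest (fun j => e j ≤ n) (n + 1)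

theorem glue {T : Q → A → Q → Prop} {x : ℕ → A} (e : ℕ → ℕ) (F : ℕ → ℕ → Q)
    (q0 q : Q) (S I : Set Q)
    (he0 : e 0 = 0) (hstep : ∀ i, e i ≤ e (i + 1)) (hstrict : ∀ i, e (i + 1) < e (i + 2))
    (hF0 : ∀ i, F i (e i) = if i = 0 then q0 else q)
    (hFend : ∀ i, F i (e (i + 1)) = q)
    (hFtrans : ∀ i k, e i ≤ k → k < e (i + 1) → T (F i k) (x k) (F i (k + 1)))
    (hFset : ∀ i, (if i = 0 then S else I) = {s | ∃ k, e i < k ∧ k ≤ e (i + 1) ∧ F i k = s})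
    (hq : q ∈ I) :
    ∃ p : ℕ → Q, p 0 = q0 ∧ (∀ k, T (p k) (x k) (p (k + 1))) ∧
      {s | ∃ k, 0 < k ∧ p k = s} = S ∪ I ∧ {s | ∀ n, ∃ k, n ≤ k ∧ p k = s} = I := by
  have hmono : Monotone e := monotone_nat_of_le_succ hstep
  have hgrow : ∀ i, i ≤ e (i + 1) := by
    intro i
    induction i with
    | zero => exact Nat.zero_le _
    | succ i ih =>
      have h2 : e (i + 1 + 1) = e (i + 2) := rfl
      have := hstrict i; omega
  have hsegle : ∀ n, e (segIdx e n) ≤ n := by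
    intro n
    exact Nat.findGreatest_spec (P := fun j => e j ≤ n) (m := 0) (Nat.zero_le _)
      (by show e 0 ≤ n; rw [he0]; exact Nat.zero_le n)
  have hseglt : ∀ n, n < e (segIdx e n + 1) := by
    intro n
    by_cases h : segIdx e n + 1 ≤ n + 1
    · by_contra hc
      push_neg at hc
      exact Nat.findGreatest_is_greatest (P := fun j => e j ≤ n) (Nat.lt_succ_self _) h hc
    · have h1 : segIdx e n ≤ n + 1 := Nat.findGreatest_le (P := fun j => e j ≤ n) _
      have h2 : segIdx e n = n + 1 := by omega
      have h3 := hgrow (n + 1)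
      rw [h2]
      omega
  have hseg_eq : ∀ i k, e i ≤ k → k < e (i + 1) → segIdx e k = i := by
    intro i k h1 h2
    by_contra hne
    rcases Nat.lt_or_ge (segIdx e k) i with h3 | h3
    · have h4 : segIdx e k + 1 ≤ i := by omega
      have := hmono h4
      have := hseglt k
      omega
    · have h4 : i + 1 ≤ segIdx e k := by omega
      have := hmono h4
      have := hsegle k
      omega
  have pval : ∀ i k, e i ≤ k → k ≤ e (i + 1) → F (segIdx e k) k = F i k := by
    intro i k h1 h2
    rcases Nat.eq_or_lt_of_le h2 with h3 | h3
    · have hs : segIdx e k = i + 1 :=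
        hseg_eq (i + 1) k (le_of_eq h3.symm) (by rw [h3]; exact hstrict i)
      rw [hs, h3, hF0 (i + 1), hFend i]
      simp
    · rw [hseg_eq i k h1 h3]
  have hp0 : F (segIdx e 0) 0 = q0 := by
    have h1 : F (segIdx e 0) 0 = F 0 0 := pval 0 0 (by simp [he0]) (Nat.zero_le _)
    have h2 := hF0 0
    rw [he0] at h2
    simp at h2
    rw [h1, h2]
  refine ⟨fun n => F (segIdx e n) n, hp0, ?_, ?_, ?_⟩
  · intro k
    dsimp only
    have h1 := hsegle k
    have h2 := hseglt k
    have h3 : F (segIdx e (k + 1)) (k + 1) = F (segIdx e k) (k + 1) :=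
      pval (segIdx e k) (k + 1) (by omega) (by omega)
    rw [h3]
    exact hFtrans (segIdx e k) k h1 h2
  · ext s
    simp only [Set.mem_setOf_eq, Set.mem_union]
    constructor
    · rintro ⟨k, hk0, hks⟩
      have h1 := hsegle k
      have h2 := hseglt k
      rcases Nat.eq_or_lt_of_le h1 with h3 | h3
      · by_cases hi : segIdx e k = 0
        · rw [hi, he0] at h3; omega
        · right
          have h5 := hF0 (segIdx e k)
          rw [if_neg hi] at h5
          rw [h3] at h5
          rw [← hks, h5]
          exact hq
      · have hset := hFset (segIdx e k)
        by_cases hi : segIdx e k = 0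
        · left
          rw [hi] at hset h3 h2 hks
          rw [if_pos rfl] at hset
          rw [hset]
          exact ⟨k, h3, by omega, hks⟩
        · right
          rw [if_neg hi] at hset
          rw [hset]
          exact ⟨k, h3, by omega, hks⟩
    · rintro (hs | hs)
      · have hset := hFset 0
        rw [if_pos rfl] at hset
        rw [hset] at hs
        obtain ⟨k, hk1, hk2, hk3⟩ := hs
        refine ⟨k, by rw [he0] at hk1; omega, ?_⟩
        rw [pval 0 k (by omega) hk2]
        exact hk3
      · have hset := hFset 1
        rw [if_neg one_ne_zero] at hset
        rw [hset] at hs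
        obtain ⟨k, hk1, hk2, hk3⟩ := hs
        have h0 := hstep 0
        refine ⟨k, by omega, ?_⟩
        rw [pval 1 k (by omega) hk2]
        exact hk3
  · ext s
    simp only [Set.mem_setOf_eq]
    constructor
    · intro h
      obtain ⟨m, hm1, hm2⟩ := h (e 1 + 1)
      have h1 := hsegle m
      have h2 := hseglt m
      have hi : segIdx e m ≠ 0 := by
        intro hi
        rw [hi] at h2
        norm_num at h2
        omega
      rcases Nat.eq_or_lt_of_le h1 with h3 | h3
      · have h5 := hF0 (segIdx e m)
        rw [if_neg hi] at h5
        rw [h3] at h5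
        rw [← hm2, h5]
        exact hq
      · have hset := hFset (segIdx e m)
        rw [if_neg hi] at hset
        have : s ∈ {s | ∃ k, e (segIdx e m) < k ∧ k ≤ e (segIdx e m + 1) ∧ F (segIdx e m) k = s} :=
          ⟨m, h3, by omega, hm2⟩
        rw [← hset] at this
        exact this
    · intro hs n
      have hset := hFset (n + 1)
      rw [if_neg (Nat.succ_ne_zero n)] at hset
      rw [hset] at hs
      obtain ⟨k, hk1, hk2, hk3⟩ := hs
      have := hgrow n
      refine ⟨k, by omega, ?_⟩
      rw [pval (n + 1) k (by omega) hk2]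
      exact hk3

end OmegaAux

open OmegaAux in
/-- gluing finite walks into an infinite initial path -/
theorem piece_to_path {A : Type} (M : OFA A) (S I : Set M.Q) (q : M.Q) (hq : q ∈ I)
    (x : ℕ → A)
    (hx : x ∈ omegaPiece {l | WalkV M.T M.q0 l q S} {l | WalkV M.T q l q I}) :
    ∃ p : ℕ → M.Q, M.InitPath p x ∧ M.runSet p = S ∪ I ∧ M.infSet p = I := by
  classical
  obtain ⟨cc, hcc, hV, hU⟩ := hx
  obtain ⟨e, he0, hes⟩ : ∃ e : ℕ → ℕ, e 0 = 0 ∧ ∀ i, e (i + 1) = cc i :=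
    ⟨fun n => match n with | 0 => 0 | (i + 1) => cc i, rfl, fun _ => rfl⟩
  have hwalk : ∀ i : ℕ, ∃ f : ℕ → M.Q,
      f (e i) = (if i = 0 then M.q0 else q) ∧ f (e (i + 1)) = q ∧
      (∀ k, e i ≤ k → k < e (i + 1) → M.T (f k) (x k) (f (k + 1))) ∧
      (if i = 0 then S else I) = {s | ∃ k, e i < k ∧ k ≤ e (i + 1) ∧ f k = s} := by
    intro i
    cases i with
    | zero =>
      obtain ⟨f, h1, h2, h3, h4⟩ := walkV_path hV x 0
        (fun k h => extract_getElem x 0 (cc 0) k h)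
      simp only [extract_length, Nat.zero_add, Nat.sub_zero] at h2 h3 h4
      rw [he0, hes]
      exact ⟨f, by simpa using h1, h2, h3, h4⟩
    | succ i =>
      obtain ⟨f, h1, h2, h3, h4⟩ := walkV_path (hU i) x (cc i)
        (fun k h => extract_getElem x (cc i) (cc (i + 1)) k h)
      have heq : cc i + (extract x (cc i) (cc (i + 1))).length = cc (i + 1) := by
        rw [extract_length]
        have := hcc i
        omega
      simp only [heq] at h2 h3 h4
      rw [hes, hes]
      exact ⟨f, by simpa using h1, h2, h3, h4⟩
  choose F hF0 hFend hFtrans hFset using hwalk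
  obtain ⟨p, hp0, htr, hrun, hinf⟩ := glue (T := M.T) (x := x) e F M.q0 q S I he0
    (by
      intro i
      cases i with
      | zero => rw [he0, hes]; exact Nat.zero_le _
      | succ i => rw [hes, hes]; exact (hcc i).le)
    (by intro i; rw [hes, hes]; exact hcc i)
    hF0 hFend hFtrans hFset hq
  exact ⟨p, ⟨hp0, htr⟩, hrun, hinf⟩

open OmegaAux in
/-- cutting an accepting run into finite walks -/
theorem path_to_piece {A : Type} (M : OFA A) (p : ℕ → M.Q) (x : ℕ → A)
    (hp : M.InitPath p x) :
    ∃ (S : Set M.Q) (q : M.Q), q ∈ M.infSet p ∧ S ∪ M.infSet p = M.runSet p ∧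
      x ∈ omegaPiece {l | WalkV M.T M.q0 l q S} {l | WalkV M.T q l q (M.infSet p)} := by
  classical
  have hft : Fintype M.Q := Fintype.ofFinite _
  obtain ⟨q, hqinf⟩ : ∃ q, q ∈ M.infSet p := by
    obtain ⟨q, hq⟩ := Finite.exists_infinite_fiber p
    refine ⟨q, fun n => ?_⟩
    have h1 : (p ⁻¹' {q}).Infinite := Set.infinite_coe_iff.mp hq
    obtain ⟨m, hmem, hlt⟩ := h1.exists_gt n
    exact ⟨m, hlt.le, hmem⟩
  have hbound : ∀ s : M.Q, ∃ n : ℕ, ∀ i, n ≤ i → p i = s → s ∈ M.infSet p := by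
    intro s
    by_cases hs : s ∈ M.infSet p
    · exact ⟨0, fun _ _ _ => hs⟩
    · have hs' : ¬ ∀ n, ∃ i, n ≤ i ∧ p i = s := hs
      push_neg at hs'
      obtain ⟨n, hn⟩ := hs'
      exact ⟨n, fun i hi hpi => absurd hpi (hn i hi)⟩
  have hN₀ : ∀ k, Finset.univ.sup (fun s => (hbound s).choose) ≤ k → p k ∈ M.infSet p := by
    intro k hk
    exact (hbound (p k)).choose_spec k
      (le_trans (Finset.le_sup (f := fun s => (hbound s).choose) (Finset.mem_univ _)) hk) rfl
  set N₀ := Finset.univ.sup (fun s => (hbound s).choose) with hN₀def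
  have hocc : ∀ s : M.Q, ∃ n : ℕ, s ∈ M.runSet p → (0 < n ∧ p n = s) := by
    intro s
    by_cases hs : s ∈ M.runSet p
    · obtain ⟨i, hi0, hi⟩ := hs
      exact ⟨i, fun _ => ⟨hi0, hi⟩⟩
    · exact ⟨0, fun h => absurd h hs⟩
  set N₁ := Finset.univ.sup (fun s => (hocc s).choose) with hN₁def
  have hstep : ∀ n : ℕ, ∃ m, n < m ∧ p m = q ∧
      ∀ s ∈ M.infSet p, ∃ k, n < k ∧ k ≤ m ∧ p k = s := by
    intro n
    have hvisit : ∀ s : M.Q, ∃ k, s ∈ M.infSet p → (n < k ∧ p k = s) := by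
      intro s
      by_cases hs : s ∈ M.infSet p
      · obtain ⟨k, hk1, hk2⟩ := hs (n + 1)
        exact ⟨k, fun _ => ⟨by omega, hk2⟩⟩
      · exact ⟨0, fun h => absurd h hs⟩
    obtain ⟨m, hm1, hm2⟩ := hqinf (max (Finset.univ.sup (fun s => (hvisit s).choose)) (n + 1))
    refine ⟨m, by omega, hm2, ?_⟩
    intro s hs
    have h1 := (hvisit s).choose_spec hs
    have h2 : (hvisit s).choose ≤ Finset.univ.sup (fun s => (hvisit s).choose) :=
      Finset.le_sup (f := fun s => (hvisit s).choose) (Finset.mem_univ _)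
    exact ⟨(hvisit s).choose, h1.1, by omega, h1.2⟩
  obtain ⟨c0, hc01, hc02⟩ := hqinf (max N₀ N₁)
  obtain ⟨cc, hcc0, hccs⟩ : ∃ cc : ℕ → ℕ, cc 0 = c0 ∧ ∀ i, cc i < cc (i + 1) ∧
      p (cc (i + 1)) = q ∧ ∀ s ∈ M.infSet p, ∃ k, cc i < k ∧ k ≤ cc (i + 1) ∧ p k = s :=
    ⟨fun i => Nat.rec c0 (fun _ prev => Classical.choose (hstep prev)) i, rfl,
      fun i => Classical.choose_spec (hstep _)⟩
  have hpq : ∀ i, p (cc i) = q := by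
    intro i
    cases i with
    | zero => rw [hcc0]; exact hc02
    | succ i => exact (hccs i).2.1
  have hge : ∀ i, max N₀ N₁ ≤ cc i := by
    intro i
    induction i with
    | zero => rw [hcc0]; exact hc01
    | succ i ih => have := (hccs i).1; omega
  refine ⟨{s | ∃ k, 0 < k ∧ k ≤ cc 0 ∧ p k = s}, q, hqinf, ?_, cc, fun i => (hccs i).1, ?_, ?_⟩
  · apply Set.Subset.antisymm
    · rintro s (⟨k, hk0, _, hk⟩ | hs)
      · exact ⟨k, hk0, hk⟩
      · obtain ⟨k, hk1, hk2⟩ := hs 1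
        exact ⟨k, hk1, hk2⟩
    · intro s hs
      by_cases hsi : s ∈ M.infSet p
      · exact Or.inr hsi
      · left
        have h1 := (hocc s).choose_spec hs
        have h2 : (hocc s).choose ≤ N₁ := by
          rw [hN₁def]; exact Finset.le_sup (f := fun s => (hocc s).choose) (Finset.mem_univ _)
        have h3 := hge 0
        exact ⟨(hocc s).choose, h1.1, by omega, h1.2⟩
  · have hw := path_walkV hp.2 (cc 0) 0
    simp only [Nat.zero_add] at hw
    rw [hp.1, hpq 0] at hw
    exact walkV_congr hw (by ext s; simp)
  · intro i
    have hw := path_walkV hp.2 (cc (i + 1) - cc i) (cc i)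
    have heq : cc i + (cc (i + 1) - cc i) = cc (i + 1) := by
      have := (hccs i).1; omega
    simp only [heq] at hw
    rw [hpq i, hpq (i + 1)] at hw
    apply walkV_congr hw
    apply Set.Subset.antisymm
    · rintro s ⟨k, hk1, _, hk3⟩
      have h1 := hge i
      rw [← hk3]
      exact hN₀ k (by omega)
    · intro s hs
      exact (hccs i).2.2 s hs

/-- The state set associated to a selector, as a function of run and inf sets. -/
def cApply {Q : Type} : CSel → Set Q → Set Q → Set Q
  | .run => fun R _ => R
  | .inf => fun _ I => I
  | .fin => fun R I => R \ I
  | .ninf => fun _ I => Iᶜ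

theorem csel_eq {A : Type} (M : OFA A) (c : CSel) (p : ℕ → M.Q) :
    M.csel c p = cApply c (M.runSet p) (M.infSet p) := by
  cases c <;> rfl


theorem stmt_0 (A : Type) [Fintype A] (M : OFA A) (c : CSel) (r : RSel) :
    IsOmegaRat (M.Lang c r) := by
  classical
  let σ := {t : Set M.Q × Set M.Q × M.Q //
    t.2.2 ∈ t.2.1 ∧ ∃ F ∈ M.Acc, RSel.holds r (cApply c (t.1 ∪ t.2.1) t.2.1) F}
  have : Fintype σ := Fintype.ofFinite _
  refine ⟨Fintype.card σ,
    fun i => {l | OmegaAux.WalkV M.T M.q0 l ((Fintype.equivFin σ).symm i).1.2.2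
      ((Fintype.equivFin σ).symm i).1.1},
    fun i => {l | OmegaAux.WalkV M.T ((Fintype.equivFin σ).symm i).1.2.2 l
      ((Fintype.equivFin σ).symm i).1.2.2 ((Fintype.equivFin σ).symm i).1.2.1},
    fun i => OmegaAux.walkV_regular _ _ _ _, fun i => OmegaAux.walkV_regular _ _ _ _, ?_⟩
  ext x
  simp only [Set.mem_iUnion, OFA.Lang, Set.mem_setOf_eq]
  constructor
  · rintro ⟨p, hp, F, hF, hold⟩
    obtain ⟨S, q, hq, hSI, hpiece⟩ := path_to_piece M p x hp
    rw [csel_eq, ← hSI] at hold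
    refine ⟨Fintype.equivFin σ ⟨(S, M.infSet p, q), hq, F, hF, hold⟩, ?_⟩
    simp only [Equiv.symm_apply_apply]
    exact hpiece
  · rintro ⟨i, hx⟩
    obtain ⟨p, hp, hrun, hinf⟩ := piece_to_path M ((Fintype.equivFin σ).symm i).1.1
      ((Fintype.equivFin σ).symm i).1.2.1 ((Fintype.equivFin σ).symm i).1.2.2
      ((Fintype.equivFin σ).symm i).2.1 x hx
    obtain ⟨F, hF, hold⟩ := ((Fintype.equivFin σ).symm i).2.2
    refine ⟨p, hp, F, hF, ?_⟩
    rw [csel_eq, hrun, hinf]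
    exact hold
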